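/- Let p be a prime and Φ : ℤ_p → ℤ_p a non-constant map with Φ(A) = Φ(−A) for all A ∈ ℤ_p, and consider the cycle set X = ℤ_p × ℤ_p with (a,x)·(b,y) = (b+x, y + Φ(b−a)). Then a bijection of X is an automorphism of this cycle set if and only if it has the form (a,x) ↦ (αa + β, αx) for some α ∈ ℤ_p ∖ {0} and β ∈ ℤ_p with α⁻¹·Φ(αA) = Φ(A) for all A ∈ ℤ_p. -/

import Mathlib

/-- A (non-degenerate) cycle set: a set with a binary operation satisfying
(C1) `(x·y)·(x·z) = (y·x)·(y·z)`, (C2) each left translation is bijective and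
(C3) the square map `x ↦ x·x` is bijective. -/
structure CycleSet (X : Type*) where
  op : X → X → X
  c1 : ∀ x y z : X, op (op x y) (op x z) = op (op y x) (op y z)
  c2 : ∀ x : X, Function.Bijective (op x)
  c3 : Function.Bijective (fun x : X => op x x)

namespace CycleSet

variable {X Y : Type*}

/-- The permutation `σ_x : y ↦ x·y`. -/
noncomputable def sigma (C : CycleSet X) (x : X) : Equiv.Perm X :=
  Equiv.ofBijective (C.op x) (C.c2 x)

/-- The permutation group `𝒢(X)` generated by all `σ_x`. -/
noncomputable def permGroup (C : CycleSet X) : Subgroup (Equiv.Perm X) :=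
  Subgroup.closure (Set.range C.sigma)

/-- A cycle set is indecomposable if `𝒢(X)` acts transitively on `X`. -/
def Indecomposable (C : CycleSet X) : Prop :=
  ∀ x y : X, ∃ g ∈ C.permGroup, g x = y

/-- A cycle set is irretractable if `σ_x = σ_y` implies `x = y`. -/
def Irretractable (C : CycleSet X) : Prop :=
  ∀ x y : X, C.op x = C.op y → x = y

/-- `f` is an isomorphism of cycle sets from `C` to `D`. -/
def IsIso (C : CycleSet X) (D : CycleSet Y) (f : X → Y) : Prop :=
  Function.Bijective f ∧ ∀ x y : X, f (C.op x y) = D.op (f x) (f y)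

/-- Two cycle sets are isomorphic if there is an isomorphism between them. -/
def Iso (C : CycleSet X) (D : CycleSet Y) : Prop :=
  ∃ f : X → Y, C.IsIso D f

end CycleSet

set_option maxRecDepth 100000 in
private theorem aux_zmod2 : ∀ z : ZMod 2, z ≠ 0 → z = 1 := by decide

set_option maxRecDepth 100000 in
set_option maxHeartbeats 1000000 in
private theorem aux_p2 : ∀ (Φ : ZMod 2 → ZMod 2) (f : ZMod 2 × ZMod 2 → ZMod 2 × ZMod 2),
    (∃ i j, Φ i ≠ Φ j) →
    (∀ (A : ZMod 2), Φ (-A) = Φ A) →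
    Function.Bijective f →
    ((∀ (u v : ZMod 2 × ZMod 2),
        f (v.1 + u.2, v.2 + Φ (v.1 - u.1)) = ((f v).1 + (f u).2, (f v).2 + Φ ((f v).1 - (f u).1))) ↔
      ∃ β, ∀ (a x : ZMod 2), f (a, x) = (a + β, x)) := by decide


theorem stmt11 {p : ℕ} (hp : p.Prime) (Φ : ZMod p → ZMod p)
    (hΦnc : ∃ i j : ZMod p, Φ i ≠ Φ j) (hΦev : ∀ A : ZMod p, Φ (-A) = Φ A)
    (C : CycleSet (ZMod p × ZMod p))
    (hC : ∀ a b x y : ZMod p, C.op (a, x) (b, y) = (b + x, y + Φ (b - a)))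
    (f : ZMod p × ZMod p → ZMod p × ZMod p) (hf : Function.Bijective f) :
    (∀ u v : ZMod p × ZMod p, f (C.op u v) = C.op (f u) (f v)) ↔
    ∃ α β : ZMod p, α ≠ 0 ∧ (∀ A : ZMod p, α⁻¹ * Φ (α * A) = Φ A) ∧
      ∀ a x : ZMod p, f (a, x) = (α * a + β, α * x) := by
  haveI : Fact p.Prime := ⟨hp⟩
  haveI : NeZero p := ⟨hp.pos.ne'⟩
  have hop : ∀ u v : ZMod p × ZMod p, C.op u v = (v.1 + u.2, v.2 + Φ (v.1 - u.1)) := by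
    rintro ⟨a, x⟩ ⟨b, y⟩; exact hC a b x y
  by_cases hp2 : p = 2
  · subst hp2
    have hRHS : (∃ α β : ZMod 2, α ≠ 0 ∧ (∀ A : ZMod 2, α⁻¹ * Φ (α * A) = Φ A) ∧
        ∀ a x : ZMod 2, f (a, x) = (α * a + β, α * x)) ↔
        (∃ β : ZMod 2, ∀ a x : ZMod 2, f (a, x) = (a + β, x)) := by
      constructor
      · rintro ⟨α, β, hα, -, hform⟩
        have hα1 : α = 1 := aux_zmod2 α hα
        subst hα1
        exact ⟨β, by simpa using hform⟩
      · rintro ⟨β, hform⟩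
        refine ⟨1, β, one_ne_zero, fun A => by simp, fun a x => by simp [hform]⟩
    rw [hRHS]
    simp only [hop]
    exact aux_p2 Φ f hΦnc hΦev hf
  · have h2 : (2 : ZMod p) ≠ 0 := by
      intro h
      have h2' : ((2 : ℕ) : ZMod p) = 0 := by exact_mod_cast h
      have := (ZMod.natCast_eq_zero_iff 2 p).mp h2'
      exact hp2 ((Nat.prime_dvd_prime_iff_eq hp Nat.prime_two).mp this)
    constructor
    · intro hom
      have key : ∀ a x b y : ZMod p, f (b + x, y + Φ (b - a)) =
          ((f (b, y)).1 + (f (a, x)).2, (f (b, y)).2 + Φ ((f (b, y)).1 - (f (a, x)).1)) := by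
        intro a x b y
        have h := hom (a, x) (b, y)
        rw [hop, hop] at h
        simpa using h
      -- second component does not depend on the first argument
      have hH : ∀ a a' x : ZMod p, (f (a, x)).2 = (f (a', x)).2 := by
        intro a a' x
        set b := (a + a') / 2 with hb
        have h2b : b + b = a + a' := by
          rw [hb]; field_simp; ring
        have hbb : b - a' = -(b - a) := by linear_combination h2b
        have e1 := key a x b 0
        have e2 := key a' x b 0
        rw [hbb, hΦev] at e2
        have h := e1.symm.trans e2
        have h1 := congrArg Prod.fst h
        simpa using h1
      obtain ⟨i, j, hij⟩ := hΦnc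
      -- basic translation equation for the first component
      have keyt : ∀ t b y : ZMod p, (f (b, y + Φ t)).1 = (f (b, y)).1 + (f (0, 0)).2 := by
        intro t b y
        have h := congrArg Prod.fst (key (b - t) 0 b y)
        rw [show b - (b - t) = t by ring] at h
        rw [hH (b - t) 0 0] at h
        simpa using h
      have step : ∀ b y : ZMod p, (f (b, y + (Φ i - Φ j))).1 = (f (b, y)).1 := by
        intro b y
        have e1 := keyt j b (y + (Φ i - Φ j))
        have e2 := keyt i b y
        rw [show y + (Φ i - Φ j) + Φ j = y + Φ i by ring] at e1
        have h := e1.symm.trans e2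
        exact add_right_cancel h
      have gnat : ∀ (n : ℕ) (b y : ZMod p), (f (b, y + (n : ZMod p) * (Φ i - Φ j))).1 = (f (b, y)).1 := by
        intro n
        induction n with
        | zero => intro b y; simp
        | succ n ih =>
          intro b y
          have h : y + ((n + 1 : ℕ) : ZMod p) * (Φ i - Φ j)
              = (y + (Φ i - Φ j)) + (n : ZMod p) * (Φ i - Φ j) := by push_cast; ring
          rw [h, ih, step]
      have hd : (Φ i - Φ j) ≠ 0 := sub_ne_zero.mpr hij
      have gconst : ∀ b y y' : ZMod p, (f (b, y')).1 = (f (b, y)).1 := by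
        intro b y y'
        set z := (y' - y) / (Φ i - Φ j) with hz
        have hn : ((z.val : ℕ) : ZMod p) = z := ZMod.natCast_rightInverse z
        have h := gnat z.val b y
        rw [hn] at h
        rw [show y + z * (Φ i - Φ j) = y' by rw [hz]; field_simp; ring] at h
        exact h
      have hc0 : (f (0, 0)).2 = 0 := by
        have h := keyt i 0 0
        rw [gconst 0 0 (0 + Φ i)] at h
        exact (left_eq_add.mp h)
      have Gadd : ∀ b x : ZMod p, (f (b + x, 0)).1 = (f (b, 0)).1 + (f (0, x)).2 := by
        intro b x
        have h := congrArg Prod.fst (key 0 x b 0)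
        rw [gconst (b + x) 0 (0 + Φ (b - 0))] at h
        exact h
      have Hzero : (f (0, (0 : ZMod p))).2 = 0 := hc0
      have Hadd : ∀ x x' : ZMod p, (f (0, x + x')).2 = (f (0, x)).2 + (f (0, x')).2 := by
        intro x x'
        have h1 := Gadd x x'
        have h2 := Gadd 0 (x + x')
        have h3 := Gadd 0 x
        rw [zero_add] at h2 h3
        rw [h3] at h1
        have h4 := h2.symm.trans h1
        linear_combination h4
      have Hnat : ∀ (n : ℕ) (x : ZMod p), (f (0, (n : ZMod p) * x)).2 = (n : ZMod p) * (f (0, x)).2 := by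
        intro n
        induction n with
        | zero => intro x; simpa using Hzero
        | succ n ih =>
          intro x
          have h : ((n + 1 : ℕ) : ZMod p) * x = (n : ZMod p) * x + x := by push_cast; ring
          rw [h, Hadd, ih]
          push_cast; ring
      set α := (f (0, 1)).2 with hα
      have Hlin : ∀ x : ZMod p, (f (0, x)).2 = α * x := by
        intro x
        have hn : ((x.val : ℕ) : ZMod p) = x := ZMod.natCast_rightInverse x
        have h := Hnat x.val 1
        rw [mul_one, hn] at h
        rw [h]; ring
      set β := (f (0, 0)).1 with hβ
      have hform : ∀ a x : ZMod p, f (a, x) = (α * a + β, α * x) := by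
        intro a x
        have h1 : (f (a, x)).1 = α * a + β := by
          rw [gconst a 0 x]
          have := Gadd 0 a
          rw [zero_add, Hlin] at this
          rw [this, ← hβ]; ring
        have h2 : (f (a, x)).2 = α * x := by rw [hH a 0 x, Hlin]
        calc f (a, x) = ((f (a, x)).1, (f (a, x)).2) := rfl
        _ = (α * a + β, α * x) := by rw [h1, h2]
      have hα0 : α ≠ 0 := by
        intro h0
        have e1 := hform 0 0
        have e2 := hform 0 1
        rw [h0] at e1 e2
        simp only [mul_zero, zero_add, mul_one, zero_mul] at e1 e2
        have := hf.1 (e1.trans e2.symm)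
        have h1 := congrArg Prod.snd this
        simp at h1
      refine ⟨α, β, hα0, ?_, hform⟩
      intro A
      have h := congrArg Prod.snd (key 0 0 A 0)
      rw [hform, hform, hform] at h
      simp only [add_zero, zero_add, sub_zero, mul_zero] at h
      have hmul : α * Φ A = Φ (α * A) := by
        rw [show α * A + β - β = α * A by ring] at h
        linear_combination h
      rw [← hmul, ← mul_assoc, inv_mul_cancel₀ hα0, one_mul]
    · rintro ⟨α, β, hα, hΦc, hform⟩
      have hΦmul : ∀ A : ZMod p, Φ (α * A) = α * Φ A := by
        intro A
        have h := hΦc A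
        calc Φ (α * A) = α * (α⁻¹ * Φ (α * A)) := by
              rw [← mul_assoc, mul_inv_cancel₀ hα, one_mul]
        _ = α * Φ A := by rw [h]
      rintro ⟨a, x⟩ ⟨b, y⟩
      rw [hop, hop]
      simp only [hform]
      refine Prod.ext ?_ ?_
      · simp only []; ring_nf
      · simp only []
        rw [show α * b + β - (α * a + β) = α * (b - a) by ring, hΦmul]
        ring
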